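/- Let G = H ⊕ C_n^r with exp(G) = n odd, exp(H) < n, and A = {1,...,n-1}. Suppose S is a sequence over G with 0 ∤ S, every element of S of order n, and N_{A,0}(S) = 2^{|S| - r} (the extremal value). Then r ≤ |S| ≤ 2r, and S = g_1 ⋯ g_r · h_1 ⋯ h_k with k ∈ [0, r], where T = g_1 ⋯ g_r is a maximal A-weighted zero-sum free subsequence, each h_j satisfies b_j h_j = ∑_{i∈I_j} a_i g_i for some b_j, a_i ∈ A and I_j ⊆ [1,r], and the sets I_1, ..., I_k are pairwise disjoint. -/

import Mathlib

open Finset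

/-- `I` is an index set carrying an `A`-weighted zero sum of `g` (the empty set counts). -/
def IsWZSum {G ι : Type*} [Fintype ι] [AddCommGroup G] (A : Set ℤ) (g : ι → G)
    (I : Finset ι) : Prop :=
  ∃ a : ι → ℤ, (∀ i ∈ I, a i ∈ A) ∧ ∑ i ∈ I, a i • g i = 0

/-- `N_{A,0}(S)`: the number of subsets of the index set carrying an `A`-weighted zero sum. -/
noncomputable def NZero {G ι : Type*} [Fintype ι] [AddCommGroup G] (A : Set ℤ) (g : ι → G) : ℕ :=
  Set.ncard {I : Finset ι | IsWZSum A g I}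

/-- The subsequence of `g` indexed by `J` is `A`-weighted zero-sum free. -/
def IsZSFree {G ι : Type*} [Fintype ι] [AddCommGroup G] (A : Set ℤ) (g : ι → G)
    (J : Finset ι) : Prop :=
  ∀ I ⊆ J, I.Nonempty → ¬ IsWZSum A g I

/-- The `A`-weighted Davenport constant of `G`. -/
noncomputable def DavenportW (A : Set ℤ) (G : Type*) [AddCommGroup G] : ℕ :=
  sInf {l : ℕ | 0 < l ∧ ∀ g : Fin l → G, ∃ I : Finset (Fin l), I.Nonempty ∧ IsWZSum A g I}

namespace S9

/-- support modulo n of an integer vector -/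
def suppN (n : ℕ) {m : ℕ} (c : Fin m → ℤ) : Finset (Fin m) :=
  Finset.univ.filter fun i => ¬ (n:ℤ) ∣ c i

lemma mem_suppN {n m : ℕ} {c : Fin m → ℤ} {i : Fin m} :
    i ∈ suppN n c ↔ ¬ (n:ℤ) ∣ c i := by simp [suppN]

lemma suppN_sub {n m : ℕ} (x y : Fin m → ℤ) :
    suppN n (fun i => x i - y i) ⊆ suppN n x ∪ suppN n y := by
  intro i hi
  rw [mem_suppN] at hi
  simp only [mem_union, mem_suppN]
  by_contra hc
  push_neg at hc
  exact hi (dvd_sub hc.1 hc.2)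

lemma suppN_add {n m : ℕ} (x y : Fin m → ℤ) :
    suppN n (fun i => x i + y i) ⊆ suppN n x ∪ suppN n y := by
  intro i hi
  rw [mem_suppN] at hi
  simp only [mem_union, mem_suppN]
  by_contra hc
  push_neg at hc
  exact hi (dvd_add hc.1 hc.2)

lemma smul_eq_zero_of_dvd {G : Type*} [AddCommGroup G] {n : ℕ} {x : G} {a : ℤ}
    (hx : (n:ℤ) • x = 0) (h : (n:ℤ) ∣ a) : a • x = 0 := by
  obtain ⟨k, rfl⟩ := h
  rw [mul_comm, mul_smul, hx, smul_zero]

lemma smul_mod {G : Type*} [AddCommGroup G] {n : ℕ} {x : G}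
    (hx : (n:ℤ) • x = 0) (a : ℤ) : (a % (n:ℤ)) • x = a • x := by
  conv_rhs => rw [← Int.emod_add_mul_ediv a (n:ℤ)]
  rw [add_smul, smul_eq_zero_of_dvd hx ⟨a / n, rfl⟩, add_zero]

lemma not_dvd_of_memA {n : ℕ} {a : ℤ} (ha : a ∈ Set.Icc 1 ((n:ℤ)-1)) : ¬ (n:ℤ) ∣ a := by
  obtain ⟨h1, h2⟩ := ha
  intro hdvd
  have := Int.le_of_dvd (by omega) hdvd
  omega

lemma mod_memA {n : ℕ} (hn : 0 < n) {a : ℤ} (ha : ¬ (n:ℤ) ∣ a) :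
    a % (n:ℤ) ∈ Set.Icc 1 ((n:ℤ)-1) := by
  have h0 : (0:ℤ) < n := by exact_mod_cast hn
  have h1 := Int.emod_nonneg a (by omega : (n:ℤ) ≠ 0)
  have h2 := Int.emod_lt_of_pos a h0
  have h3 : a % (n:ℤ) ≠ 0 := fun h => ha (Int.dvd_iff_emod_eq_zero.mpr h)
  constructor <;> omega

variable {H : Type*} [AddCommGroup H] {n r m : ℕ}

/-- `c` is in the kernel: the full weighted sum vanishes. -/
def MemK (g : Fin m → H × (Fin r → ZMod n)) (c : Fin m → ℤ) : Prop :=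
  ∑ i, c i • g i = 0

lemma memK_sum_supp {g : Fin m → H × (Fin r → ZMod n)} (hsm : ∀ i, (n:ℤ) • g i = 0)
    {c : Fin m → ℤ} (hc : MemK g c) :
    ∑ i ∈ suppN n c, c i • g i = 0 := by
  rw [Finset.sum_subset (Finset.subset_univ _)]
  · exact hc
  · intro i _ hi
    rw [mem_suppN, not_not] at hi
    exact smul_eq_zero_of_dvd (hsm i) hi

lemma wzs_iff (hn : 0 < n) (g : Fin m → H × (Fin r → ZMod n))
    (hsm : ∀ i, (n:ℤ) • g i = 0) (I : Finset (Fin m)) :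
    IsWZSum (Set.Icc 1 ((n:ℤ)-1)) g I ↔ ∃ c, MemK g c ∧ suppN n c = I := by
  constructor
  · rintro ⟨a, haA, hsum⟩
    classical
    refine ⟨fun i => if i ∈ I then a i else 0, ?_, ?_⟩
    · rw [MemK, ← hsum]
      rw [← Finset.sum_subset (Finset.subset_univ I) (by intro i _ hi; simp [hi])]
      exact Finset.sum_congr rfl (fun i hi => by simp [hi])
    · ext i
      rw [mem_suppN]
      by_cases hi : i ∈ I <;> simp [hi]
      exact not_dvd_of_memA (haA i hi)
  · rintro ⟨c, hc, rfl⟩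
    refine ⟨fun i => c i % n, fun i hi => mod_memA hn (mem_suppN.mp hi), ?_⟩
    rw [show ∑ i ∈ suppN n c, (c i % (n:ℤ)) • g i = ∑ i ∈ suppN n c, c i • g i from
      Finset.sum_congr rfl (fun i _ => smul_mod (hsm i) (c i))]
    exact memK_sum_supp hsm hc

lemma zsfree_iff (hn : 0 < n) (g : Fin m → H × (Fin r → ZMod n))
    (hsm : ∀ i, (n:ℤ) • g i = 0) (J : Finset (Fin m)) :
    IsZSFree (Set.Icc 1 ((n:ℤ)-1)) g J ↔
      ∀ c, MemK g c → suppN n c ⊆ J → suppN n c = ∅ := by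
  constructor
  · intro hf c hc hsub
    by_contra hne
    exact hf _ hsub (Finset.nonempty_iff_ne_empty.mpr hne)
      ((wzs_iff hn g hsm _).mpr ⟨c, hc, rfl⟩)
  · rintro hf I hIJ hne hw
    obtain ⟨c, hc, rfl⟩ := (wzs_iff hn g hsm _).mp hw
    exact (Finset.nonempty_iff_ne_empty.mp hne) (hf c hc hIJ)

/-- counting the `q`-torsion of `(ZMod (e*q))^r` -/
lemma card_T (e q : ℕ) [NeZero (e*q)] (he : 0 < e) (hq : 0 < q) (r : ℕ) :
    ((Finset.univ : Finset (Fin r → ZMod (e*q))).filter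
      fun w => (q:ℤ) • w = 0).card = q ^ r := by
  classical
  haveI : NeZero q := ⟨hq.ne'⟩
  have key : ∀ w : Fin r → ZMod (e*q), ((q:ℤ) • w = 0) ↔ ∀ k, e ∣ (w k).val := by
    intro w
    constructor
    · intro hw k
      have : (q:ℤ) • w k = 0 := by
        have := congr_fun hw k
        simpa using this
      have h2 : ((q * (w k).val : ℕ) : ZMod (e*q)) = 0 := by
        push_cast
        rw [ZMod.natCast_rightInverse (w k)] at *
        rw [zsmul_eq_mul] at this
        push_cast at this ⊢
        exact this
      rw [ZMod.natCast_eq_zero_iff] at h2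
      obtain ⟨t, ht⟩ := h2
      refine ⟨t, ?_⟩
      have : q * (w k).val = q * (e * t) := by rw [ht]; ring
      exact Nat.eq_of_mul_eq_mul_left hq this
    · intro hw
      funext k
      obtain ⟨t, ht⟩ := hw k
      have : w k = ((e * t : ℕ) : ZMod (e*q)) := by
        rw [← ht, ZMod.natCast_rightInverse (w k)]
      rw [Pi.smul_apply, Pi.zero_apply, this, zsmul_eq_mul]
      push_cast
      have : (q : ZMod (e*q)) * (e * t) = ((e*q : ℕ) : ZMod (e*q)) * t := by push_cast; ring
      rw [this, ZMod.natCast_self, zero_mul]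
  have hcq : q ^ r = Fintype.card (Fin r → ZMod q) := by
    rw [Fintype.card_fun, ZMod.card, Fintype.card_fin]
  rw [hcq, ← Finset.card_univ]
  apply Finset.card_bij' (i := fun w _ => fun k => (((w k).val / e : ℕ) : ZMod q))
    (j := fun b _ => fun k => ((e * (b k).val : ℕ) : ZMod (e*q)))
  · intro a ha; exact Finset.mem_univ _
  · intro b hb
    rw [Finset.mem_filter]
    refine ⟨Finset.mem_univ _, (key _).mpr fun k => ?_⟩
    have hlt : e * (b k).val < e * q := mul_lt_mul_of_pos_left (ZMod.val_lt (b k)) he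
    rw [ZMod.val_cast_of_lt hlt]
    exact Dvd.intro _ rfl
  · intro w hw
    rw [Finset.mem_filter] at hw
    have hdvd := (key w).mp hw.2
    funext k
    simp only
    obtain ⟨t, ht⟩ := hdvd k
    have hlt : (w k).val < e * q := ZMod.val_lt _
    have htq : t < q := by
      rw [ht] at hlt
      exact lt_of_mul_lt_mul_left hlt (Nat.zero_le e)
    have hval : ((w k).val / e : ℕ) = t := by rw [ht, Nat.mul_div_cancel_left t he]
    rw [hval, ZMod.val_cast_of_lt htq, ← ht, ZMod.natCast_rightInverse (w k)]
  · intro b hb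
    funext k
    simp only
    have hlt : e * (b k).val < e * q := mul_lt_mul_of_pos_left (ZMod.val_lt (b k)) he
    rw [ZMod.val_cast_of_lt hlt, Nat.mul_div_cancel_left _ he,
      ZMod.natCast_rightInverse (b k)]


lemma davenport [Finite H] (hn : 0 < n)
    (hedvd : AddMonoid.exponent H ∣ n) (hlt : AddMonoid.exponent H < n)
    (g : Fin m → H × (Fin r → ZMod n)) (hsm : ∀ i, (n:ℤ) • g i = 0)
    (J : Finset (Fin m)) (hJ : J.card = r + 1) :
    ∃ c, MemK g c ∧ suppN n c ⊆ J ∧ (suppN n c).Nonempty := by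
  classical
  set e := AddMonoid.exponent H with he_def
  have he : 0 < e :=
    AddMonoid.exponent_pos.mpr AddMonoid.ExponentExists.of_finite
  obtain ⟨q, hnq⟩ := hedvd
  have hq : 0 < q := by
    rcases Nat.eq_zero_or_pos q with h | h
    · exfalso; rw [h, mul_zero] at hnq; omega
    · exact h
  have h2q : 2 ≤ q := by
    by_contra h
    interval_cases q <;> omega
  have hexph : ∀ h : H, (e:ℤ) • h = 0 := by
    intro h
    rw [natCast_zsmul]
    exact AddMonoid.exponent_nsmul_eq_zero h
  subst hnq
  haveI : NeZero (e * q) := ⟨hn.ne'⟩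
  -- the torsion target set
  set T : Finset (Fin r → ZMod (e*q)) :=
    Finset.univ.filter (fun w => (q:ℤ) • w = 0) with hT_def
  -- the pigeonhole map
  set F : ({x // x ∈ J} → ZMod q) → (Fin r → ZMod (e*q)) :=
    fun b => ∑ x : {x // x ∈ J}, ((e:ℤ) * ((b x).val : ℤ)) • (g x.1).2 with hF_def
  haveI : NeZero q := ⟨hq.ne'⟩
  have hsm2 : ∀ i, ((e:ℤ) * (q:ℤ)) • (g i).2 = 0 := by
    intro i
    have h := congrArg (AddMonoidHom.snd H (Fin r → ZMod (e*q))) (hsm i)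
    rw [map_zsmul] at h
    have h2 : ((e:ℤ) * (q:ℤ)) = ((e*q : ℕ) : ℤ) := by push_cast; ring
    rw [h2]
    simpa using h
  have hmaps : ∀ b, F b ∈ T := by
    intro b
    rw [hT_def, Finset.mem_filter]
    refine ⟨Finset.mem_univ _, ?_⟩
    rw [hF_def]
    rw [Finset.smul_sum]
    rw [Finset.sum_eq_zero]
    intro x _
    rw [smul_smul]
    have h5 : (q:ℤ) * ((e:ℤ) * ((b x).val : ℤ)) = ((b x).val : ℤ) * ((e:ℤ) * (q:ℤ)) := by
      ring
    rw [h5, mul_smul, hsm2 x.1, smul_zero]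
  have hcard : T.card < Fintype.card ({x // x ∈ J} → ZMod q) := by
    rw [card_T e q he hq r, Fintype.card_fun, ZMod.card, Fintype.card_coe, hJ]
    exact Nat.pow_lt_pow_right h2q (by omega)
  obtain ⟨b, -, b', -, hbb', hFbb⟩ :=
    Finset.exists_ne_map_eq_of_card_lt_of_maps_to
      (by rw [Finset.card_univ]; exact hcard) (fun b _ => hmaps b)
  set c : Fin m → ℤ :=
    fun i => if h : i ∈ J then (e:ℤ) * (((b ⟨i,h⟩).val : ℤ) - ((b' ⟨i,h⟩).val : ℤ)) else 0
    with hc_def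
  have hcsupp : suppN (e*q) c ⊆ J := by
    intro i hi
    rw [mem_suppN] at hi
    by_contra h
    rw [hc_def] at hi
    simp only [dif_neg h] at hi
    exact hi (dvd_zero _)
  have hcJ : ∀ x : {x // x ∈ J}, c x.1 = (e:ℤ) * (((b x).val : ℤ) - ((b' x).val : ℤ)) := by
    intro x
    rw [hc_def]
    simp only [dif_pos x.2]
  refine ⟨c, ?_, hcsupp, ?_⟩
  · -- MemK
    rw [MemK]
    rw [← Finset.sum_subset (Finset.subset_univ J)
      (by intro i _ hi; rw [hc_def]; simp [dif_neg hi])]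
    rw [← Finset.sum_attach J (fun i => c i • g i)]
    apply Prod.ext
    · rw [Prod.fst_zero]
      rw [show (∑ x ∈ J.attach, c x.1 • g x.1).1
          = ∑ x ∈ J.attach, (c x.1 • g x.1).1 from
        map_sum (AddMonoidHom.fst H (Fin r → ZMod (e*q))) _ _]
      rw [Finset.sum_eq_zero]
      intro x _
      have h1 : (c x.1 • g x.1).1 = c x.1 • (g x.1).1 :=
        map_zsmul (AddMonoidHom.fst H (Fin r → ZMod (e*q))) _ _
      rw [h1, hcJ x, mul_comm, mul_smul]
      rw [hexph, smul_zero]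
    · rw [Prod.snd_zero]
      rw [show (∑ x ∈ J.attach, c x.1 • g x.1).2
          = ∑ x ∈ J.attach, (c x.1 • g x.1).2 from
        map_sum (AddMonoidHom.snd H (Fin r → ZMod (e*q))) _ _]
      have hterm : ∀ x : {x // x ∈ J},
          (c x.1 • g x.1).2 = ((e:ℤ) * ((b x).val : ℤ)) • (g x.1).2
            - ((e:ℤ) * ((b' x).val : ℤ)) • (g x.1).2 := by
        intro x
        have h1 : (c x.1 • g x.1).2 = c x.1 • (g x.1).2 :=
          map_zsmul (AddMonoidHom.snd H (Fin r → ZMod (e*q))) _ _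
        rw [h1, hcJ x, mul_sub, sub_smul]
      rw [Finset.sum_congr rfl (fun x _ => hterm x), Finset.sum_sub_distrib]
      have hFe : F b = F b' := hFbb
      simp only [hF_def] at hFe
      rw [Finset.univ_eq_attach J] at hFe
      rw [hFe, sub_self]
  · -- nonempty
    have : ∃ x : {x // x ∈ J}, b x ≠ b' x := by
      by_contra h
      push_neg at h
      exact hbb' (funext h)
    obtain ⟨x, hx⟩ := this
    refine ⟨x.1, ?_⟩
    rw [mem_suppN, hcJ x]
    intro hdvd
    set d : ℤ := ((b x).val : ℤ) - ((b' x).val : ℤ) with hd_def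
    have hne : d ≠ 0 := by
      intro h
      apply hx
      apply ZMod.val_injective
      omega
    have hb1 := ZMod.val_lt (b x)
    have hb2 := ZMod.val_lt (b' x)
    have hdq : (q:ℤ) ∣ d := by
      have h1 : (e:ℤ) * (q:ℤ) ∣ (e:ℤ) * d := by push_cast at hdvd ⊢; exact hdvd
      exact (mul_dvd_mul_iff_left (by positivity : (e:ℤ) ≠ 0)).mp h1
    obtain ⟨k, hk⟩ := hdq
    have hdlt : d < q ∧ -(q:ℤ) < d := by
      constructor <;> [skip; skip] <;> omega
    rcases lt_trichotomy k 0 with hk0 | hk0 | hk0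
    · nlinarith [hdlt.2]
    · exact hne (by rw [hk, hk0, mul_zero])
    · nlinarith [hdlt.1]

lemma zsfree_card_le [Finite H] (hn : 0 < n)
    (hedvd : AddMonoid.exponent H ∣ n) (hlt : AddMonoid.exponent H < n)
    (g : Fin m → H × (Fin r → ZMod n)) (hsm : ∀ i, (n:ℤ) • g i = 0)
    (J : Finset (Fin m)) (hJ : IsZSFree (Set.Icc 1 ((n:ℤ)-1)) g J) : J.card ≤ r := by
  by_contra h
  push_neg at h
  obtain ⟨J', hJ'sub, hJ'card⟩ := Finset.exists_subset_card_eq (show r + 1 ≤ J.card by omega)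
  obtain ⟨c, hc, hsub, hne⟩ := davenport hn hedvd hlt g hsm J' hJ'card
  have := (zsfree_iff hn g hsm J).mp hJ c hc (hsub.trans hJ'sub)
  rw [this] at hne
  exact Finset.not_nonempty_empty hne

end S9

open S9 in
theorem stmt9 (H : Type*) [AddCommGroup H] [Finite H] (n r : ℕ) (hodd : Odd n)
    (hexpH : AddMonoid.exponent H < n)
    (hexp : AddMonoid.exponent (H × (Fin r → ZMod n)) = n)
    (m : ℕ) (g : Fin m → H × (Fin r → ZMod n))
    (h0 : ∀ i, g i ≠ 0) (hord : ∀ i, addOrderOf (g i) = n)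
    (hN : (NZero (Set.Icc 1 ((n : ℤ) - 1)) g : ℚ) = 2 ^ ((m : ℤ) - (r : ℤ))) :
    r ≤ m ∧ m ≤ 2 * r ∧ ∃ It : Finset (Fin m), It.card = r ∧
      IsZSFree (Set.Icc 1 ((n : ℤ) - 1)) g It ∧
      (∀ J : Finset (Fin m),
        IsZSFree (Set.Icc 1 ((n : ℤ) - 1)) g J → J.card ≤ It.card) ∧
      ∃ Ifam : Fin m → Finset (Fin m),
        (∀ j ∉ It, Ifam j ⊆ It ∧ ∃ b ∈ Set.Icc 1 ((n : ℤ) - 1),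
          ∃ a : Fin m → ℤ, (∀ i ∈ Ifam j, a i ∈ Set.Icc 1 ((n : ℤ) - 1)) ∧
            b • g j = ∑ i ∈ Ifam j, a i • g i) ∧
        (∀ j₁ ∉ It, ∀ j₂ ∉ It, j₁ ≠ j₂ → Disjoint (Ifam j₁) (Ifam j₂)) := by
  classical
  have hn : 0 < n := lt_of_le_of_lt (Nat.zero_le _) hexpH
  have hsm : ∀ i, (n:ℤ) • g i = 0 := by
    intro i
    have h9 := addOrderOf_nsmul_eq_zero (g i)
    rw [hord i] at h9
    rw [natCast_zsmul]
    exact h9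
  have hedvd : AddMonoid.exponent H ∣ n := by
    rw [← hexp, AddMonoid.exponent_prod]
    exact dvd_lcm_left _ _
  have hodd2 : ∀ x : ℤ, (n:ℤ) ∣ 2 * x → (n:ℤ) ∣ x := by
    intro x hx
    obtain ⟨k, hk⟩ := hx
    have hek : Even ((n:ℤ) * k) := ⟨x, by omega⟩
    rcases Int.even_mul.mp hek with h | h
    · exfalso
      have h2 : Even n := by exact_mod_cast h
      exact (Nat.not_even_iff_odd.mpr hodd) h2
    · obtain ⟨k', hk'⟩ := h
      refine ⟨k', ?_⟩
      have h9 : 2 * x = 2 * ((n:ℤ) * k') := by rw [hk, hk']; ring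
      omega
  have hsingle : ∀ (j : Fin m) (a : ℤ), ¬ (n:ℤ) ∣ a → a • g j ≠ 0 := by
    intro j a ha h0s
    have h1 : (a % (n:ℤ)) • g j = 0 := by rw [smul_mod (hsm j)]; exact h0s
    have h2 := mod_memA hn ha
    obtain ⟨u1, u2⟩ := h2
    set k := (a % (n:ℤ)).toNat with hk_def
    have h3 : (k:ℤ) = a % n := by omega
    have h4 : k • g j = 0 := by
      rw [← natCast_zsmul, h3]; exact h1
    have h5 := addOrderOf_le_of_nsmul_eq_zero (by omega : 0 < k) h4
    rw [hord j] at h5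
    omega
  -- the collection of weighted zero-sum index sets
  set VS : Finset (Finset (Fin m)) :=
    Finset.univ.filter (fun I => IsWZSum (Set.Icc 1 ((n:ℤ)-1)) g I) with hVS_def
  have hVS : NZero (Set.Icc 1 ((n:ℤ)-1)) g = VS.card := by
    rw [NZero, Set.ncard_eq_toFinset_card', Set.toFinset_setOf]
  have hempty : ∅ ∈ VS := by
    rw [hVS_def, Finset.mem_filter]
    exact ⟨Finset.mem_univ _, ⟨fun _ => 1, by simp, by simp⟩⟩
  have hVSpos : 1 ≤ VS.card := Finset.card_pos.mpr ⟨∅, hempty⟩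
  have hmul : VS.card * 2 ^ r = 2 ^ m := by
    have h1 : (VS.card : ℚ) = 2 ^ ((m:ℤ) - (r:ℤ)) := by
      rw [← hVS]; exact_mod_cast hN
    have h2 : ((VS.card : ℚ)) * 2 ^ (r:ℤ) = 2 ^ (m:ℤ) := by
      rw [h1, ← zpow_add₀ (by norm_num : (2:ℚ) ≠ 0)]
      congr 1
      ring
    have h3 : ((VS.card * 2 ^ r : ℕ) : ℚ) = ((2 ^ m : ℕ) : ℚ) := by
      push_cast
      rw [← zpow_natCast (2:ℚ) r, ← zpow_natCast (2:ℚ) m]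
      exact h2
    exact_mod_cast h3
  have hrm : r ≤ m := by
    have h6 : 2 ^ r ≤ 2 ^ m :=
      le_trans (Nat.le_mul_of_pos_left _ hVSpos) (le_of_eq hmul)
    exact (Nat.pow_le_pow_iff_right (by norm_num)).mp h6
  -- maximal zero-sum free subset
  have hfree_empty : IsZSFree (Set.Icc 1 ((n:ℤ)-1)) g ∅ := by
    intro I hI hne _
    rw [Finset.subset_empty] at hI
    exact Finset.not_nonempty_empty (hI ▸ hne)
  obtain ⟨It, hItmem, hItmax'⟩ := Finset.exists_max_image
    (Finset.univ.filter (fun J : Finset (Fin m) => IsZSFree (Set.Icc 1 ((n:ℤ)-1)) g J))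
    Finset.card ⟨∅, by simp [hfree_empty]⟩
  have hItfree : IsZSFree (Set.Icc 1 ((n:ℤ)-1)) g It := (Finset.mem_filter.mp hItmem).2
  have hItmax : ∀ J, IsZSFree (Set.Icc 1 ((n:ℤ)-1)) g J → J.card ≤ It.card := fun J hJ =>
    hItmax' J (Finset.mem_filter.mpr ⟨Finset.mem_univ _, hJ⟩)
  have htler : It.card ≤ r := zsfree_card_le hn hedvd hexpH g hsm It hItfree
  have hKfreeIt := (zsfree_iff hn g hsm It).mp hItfree
  -- choose witnesses for each j outside It
  have hex : ∀ j : Fin m, ∃ c, j ∉ It →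
      (MemK g c ∧ suppN n c ⊆ insert j It ∧ j ∈ suppN n c) := by
    intro j
    by_cases hj : j ∈ It
    · exact ⟨0, fun h => absurd hj h⟩
    · have hnotfree : ¬ IsZSFree (Set.Icc 1 ((n:ℤ)-1)) g (insert j It) := by
        intro hfree
        have := hItmax _ hfree
        rw [Finset.card_insert_of_notMem hj] at this
        omega
      rw [zsfree_iff hn g hsm] at hnotfree
      push_neg at hnotfree
      obtain ⟨c, hc, hsub, hne⟩ := hnotfree
      refine ⟨c, fun _ => ⟨hc, hsub, ?_⟩⟩
      by_contra hjs
      apply Finset.nonempty_iff_ne_empty.mp hne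
      apply hKfreeIt c hc
      intro i hi
      rcases Finset.mem_insert.mp (hsub hi) with h | h
      · exact absurd (h ▸ hi) hjs
      · exact h
  choose cc hcc using hex
  have hdvd_out : ∀ j ∈ Itᶜ, ∀ j' : Fin m, j' ∉ It → j' ≠ j → ((n:ℤ)) ∣ cc j j' := by
    intro j hj j' hj' hne
    have hj2 : j ∉ It := Finset.mem_compl.mp hj
    have hsub := (hcc j hj2).2.1
    by_contra h
    have h9 : j' ∈ suppN n (cc j) := mem_suppN.mpr h
    rcases Finset.mem_insert.mp (hsub h9) with h1 | h1
    · exact hne h1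
    · exact hj' h1
  have hSU_apply : ∀ (U : Finset (Fin m)) (i : Fin m),
      (∑ j ∈ U, cc j) i = ∑ j ∈ U, cc j i := by
    intro U i; exact Finset.sum_apply i U cc
  have hmemSU : ∀ U ⊆ Itᶜ, MemK g (∑ j ∈ U, cc j) := by
    intro U hU
    rw [MemK]
    have h9 : ∀ i : Fin m, (∑ j ∈ U, cc j) i • g i = ∑ j ∈ U, cc j i • g i := by
      intro i
      rw [hSU_apply, Finset.sum_smul]
    rw [Finset.sum_congr rfl (fun i _ => h9 i), Finset.sum_comm]
    apply Finset.sum_eq_zero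
    intro j hj
    exact (hcc j (Finset.mem_compl.mp (hU hj))).1
  have htrace : ∀ U ⊆ Itᶜ, suppN n (∑ j ∈ U, cc j) ∩ Itᶜ = U := by
    intro U hU
    ext j'
    simp only [Finset.mem_inter, mem_suppN, Finset.mem_compl]
    constructor
    · rintro ⟨hnd, hj'⟩
      by_contra hj'U
      apply hnd
      rw [hSU_apply]
      apply Finset.dvd_sum
      intro j hj
      exact hdvd_out j (hU hj) j' hj' (fun h => hj'U (h ▸ hj))
    · intro hj'U
      have hj' : j' ∉ It := Finset.mem_compl.mp (hU hj'U)
      refine ⟨?_, hj'⟩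
      rw [hSU_apply]
      intro hdvd
      have hrest : (n:ℤ) ∣ ∑ j ∈ U.erase j', cc j j' :=
        Finset.dvd_sum (fun j hj => hdvd_out j (hU (Finset.mem_of_mem_erase hj)) j' hj'
          (Finset.ne_of_mem_erase hj).symm)
      have hsum := Finset.sum_erase_add U (fun j => cc j j') hj'U
      have h7 : cc j' j' = (∑ j ∈ U, cc j j') - ∑ j ∈ U.erase j', cc j j' := by
        rw [← hsum]; ring
      exact (mem_suppN.mp (hcc j' hj').2.2) (h7 ▸ dvd_sub hdvd hrest)
  have hWZ_SU : ∀ U ⊆ Itᶜ, suppN n (∑ j ∈ U, cc j) ∈ VS := by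
    intro U hU
    rw [hVS_def, Finset.mem_filter]
    exact ⟨Finset.mem_univ _, (wzs_iff hn g hsm _).mpr ⟨_, hmemSU U hU, rfl⟩⟩
  have hinj : Set.InjOn (fun U => suppN n (∑ j ∈ U, cc j)) ↑(Itᶜ.powerset) := by
    intro U hU U' hU' h
    have hU1 : U ⊆ Itᶜ := Finset.mem_powerset.mp (Finset.mem_coe.mp hU)
    have hU2 : U' ⊆ Itᶜ := Finset.mem_powerset.mp (Finset.mem_coe.mp hU')
    calc U = suppN n (∑ j ∈ U, cc j) ∩ Itᶜ := (htrace U hU1).symm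
    _ = suppN n (∑ j ∈ U', cc j) ∩ Itᶜ := by rw [show suppN n (∑ j ∈ U, cc j) = suppN n (∑ j ∈ U', cc j) from h]
    _ = U' := htrace U' hU2
  have hcount : 2 ^ (m - It.card) ≤ VS.card := by
    have h9 := Finset.card_le_card_of_injOn (fun U => suppN n (∑ j ∈ U, cc j))
      (fun U hU => hWZ_SU U (Finset.mem_powerset.mp hU)) hinj
    rw [Finset.card_powerset, Finset.card_compl, Fintype.card_fin] at h9
    exact h9
  have hItm : It.card ≤ m := le_trans (Finset.card_le_univ It) (by rw [Fintype.card_fin])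
  have hrt : r ≤ It.card := by
    have h1 : 2 ^ (m - It.card) * 2 ^ r ≤ 2 ^ m := by
      calc 2 ^ (m - It.card) * 2 ^ r ≤ VS.card * 2 ^ r := Nat.mul_le_mul_right _ hcount
      _ = 2 ^ m := hmul
    rw [← pow_add] at h1
    have h2 : m - It.card + r ≤ m := (Nat.pow_le_pow_iff_right (by norm_num)).mp h1
    omega
  have htr : It.card = r := le_antisymm htler hrt
  have hVScard : VS.card = 2 ^ (m - r) := by
    have h9 : VS.card * 2 ^ r = 2 ^ (m - r) * 2 ^ r := by
      rw [hmul, ← pow_add]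
      congr 1
      omega
    exact Nat.eq_of_mul_eq_mul_right (by positivity) h9
  have himage : Finset.image (fun U => suppN n (∑ j ∈ U, cc j)) (Itᶜ.powerset) = VS := by
    apply Finset.eq_of_subset_of_card_le
    · intro I hI
      obtain ⟨U, hU, rfl⟩ := Finset.mem_image.mp hI
      exact hWZ_SU U (Finset.mem_powerset.mp hU)
    · rw [Finset.card_image_of_injOn hinj, Finset.card_powerset, Finset.card_compl,
        Fintype.card_fin, hVScard, htr]
  have huniq : ∀ c, MemK g c → suppN n c = suppN n (∑ j ∈ (suppN n c ∩ Itᶜ), cc j) := by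
    intro c hc
    have hmem : suppN n c ∈ VS := by
      rw [hVS_def, Finset.mem_filter]
      exact ⟨Finset.mem_univ _, (wzs_iff hn g hsm _).mpr ⟨c, hc, rfl⟩⟩
    rw [← himage] at hmem
    obtain ⟨U, hU, hUeq⟩ := Finset.mem_image.mp hmem
    have hU1 : U ⊆ Itᶜ := Finset.mem_powerset.mp hU
    have h8 : suppN n c ∩ Itᶜ = U := by rw [← hUeq, htrace U hU1]
    rw [h8, hUeq]
  have hstar : ∀ c c', MemK g c → MemK g c' →
      suppN n c ∩ Itᶜ = suppN n c' ∩ Itᶜ → suppN n c = suppN n c' := by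
    intro c c' h h' hh
    rw [huniq c h, huniq c' h', hh]
  have htrace1 : ∀ j, j ∉ It → suppN n (cc j) ∩ Itᶜ = {j} := by
    intro j hj
    ext i
    simp only [Finset.mem_inter, Finset.mem_compl, Finset.mem_singleton]
    constructor
    · rintro ⟨hi, hiIt⟩
      rcases Finset.mem_insert.mp ((hcc j hj).2.1 hi) with h | h
      · exact h
      · exact absurd h hiIt
    · intro h
      rw [h]
      exact ⟨(hcc j hj).2.2, hj⟩
  -- union lemma for pairs
  have hpair : ∀ j1 j2, j1 ∉ It → j2 ∉ It → j1 ≠ j2 →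
      MemK g (fun i => cc j1 i + cc j2 i) ∧
      suppN n (fun i => cc j1 i + cc j2 i) = suppN n (cc j1) ∪ suppN n (cc j2) ∧
      suppN n (fun i => cc j1 i + cc j2 i) ∩ Itᶜ = {j1, j2} := by
    intro j1 j2 hj1 hj2 hne
    have hc1 := hcc j1 hj1
    have hc2 := hcc j2 hj2
    have hSUpair : (∑ j ∈ ({j1, j2} : Finset (Fin m)), cc j) = fun i => cc j1 i + cc j2 i := by
      funext i
      rw [hSU_apply]
      exact Finset.sum_pair hne
    have hsubpair : ({j1, j2} : Finset (Fin m)) ⊆ Itᶜ := by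
      intro x hx
      rcases Finset.mem_insert.mp hx with h | h
      · exact h ▸ Finset.mem_compl.mpr hj1
      · rw [Finset.mem_singleton] at h
        exact h ▸ Finset.mem_compl.mpr hj2
    have hmema : MemK g (fun i => cc j1 i + cc j2 i) := by
      rw [← hSUpair]; exact hmemSU _ hsubpair
    have htracea : suppN n (fun i => cc j1 i + cc j2 i) ∩ Itᶜ = {j1, j2} := by
      rw [← hSUpair]; exact htrace _ hsubpair
    set bb : Fin m → ℤ := fun i => cc j1 i + 2 * cc j2 i with hbb_def
    have hmemb : MemK g bb := by
      rw [MemK]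
      have h9 : ∀ i, bb i • g i = cc j1 i • g i + (2:ℤ) • (cc j2 i • g i) := by
        intro i
        show (cc j1 i + 2 * cc j2 i) • g i = _
        rw [add_smul, mul_smul]
      rw [Finset.sum_congr rfl fun i _ => h9 i, Finset.sum_add_distrib,
        show ∑ i, cc j1 i • g i = 0 from hc1.1, ← Finset.smul_sum,
        show ∑ i, cc j2 i • g i = 0 from hc2.1, smul_zero, add_zero]
    have htraceb : suppN n bb ∩ Itᶜ = {j1, j2} := by
      ext i
      simp only [Finset.mem_inter, mem_suppN, Finset.mem_compl, Finset.mem_insert,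
        Finset.mem_singleton]
      constructor
      · rintro ⟨hnd, hiIt⟩
        by_contra hcon
        push_neg at hcon
        apply hnd
        show (n:ℤ) ∣ cc j1 i + 2 * cc j2 i
        have h1 : (n:ℤ) ∣ cc j1 i := hdvd_out j1 (Finset.mem_compl.mpr hj1) i hiIt hcon.1
        have h2 : (n:ℤ) ∣ cc j2 i := hdvd_out j2 (Finset.mem_compl.mpr hj2) i hiIt hcon.2
        exact dvd_add h1 (Dvd.dvd.mul_left h2 2)
      · intro hcon
        rcases hcon with h | h
        · rw [h]
          refine ⟨?_, hj1⟩
          show ¬ (n:ℤ) ∣ cc j1 j1 + 2 * cc j2 j1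
          intro hd
          have h2 : (n:ℤ) ∣ cc j2 j1 := hdvd_out j2 (Finset.mem_compl.mpr hj2) j1 hj1 hne
          have h1 : (n:ℤ) ∣ cc j1 j1 := by
            have h3 := dvd_sub hd (Dvd.dvd.mul_left h2 2)
            simpa using h3
          exact (mem_suppN.mp hc1.2.2) h1
        · rw [h]
          refine ⟨?_, hj2⟩
          show ¬ (n:ℤ) ∣ cc j1 j2 + 2 * cc j2 j2
          intro hd
          have h1 : (n:ℤ) ∣ cc j1 j2 := hdvd_out j1 (Finset.mem_compl.mpr hj1) j2 hj2 hne.symm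
          have h2 : (n:ℤ) ∣ 2 * cc j2 j2 := by
            have h3 := dvd_sub hd h1
            simpa using h3
          exact (mem_suppN.mp hc2.2.2) (hodd2 _ h2)
    have hW : suppN n bb = suppN n (fun i => cc j1 i + cc j2 i) :=
      hstar bb _ hmemb hmema (by rw [htraceb, htracea])
    have hc2W : suppN n (cc j2) ⊆ suppN n (fun i => cc j1 i + cc j2 i) := by
      have h9 : suppN n (fun i => bb i - (fun i => cc j1 i + cc j2 i) i) ⊆
          suppN n bb ∪ suppN n (fun i => cc j1 i + cc j2 i) :=
        suppN_sub bb (fun i => cc j1 i + cc j2 i)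
      have h10 : (fun i => bb i - (fun i => cc j1 i + cc j2 i) i) = cc j2 := by
        funext i; simp only [hbb_def]; ring
      rw [h10, hW, Finset.union_self] at h9
      exact h9
    have hc1W : suppN n (cc j1) ⊆ suppN n (fun i => cc j1 i + cc j2 i) := by
      have h9 : suppN n (fun i => (fun i => 2 * (cc j1 i + cc j2 i)) i - bb i) ⊆
          suppN n (fun i => 2 * (cc j1 i + cc j2 i)) ∪ suppN n bb :=
        suppN_sub (fun i => 2 * (cc j1 i + cc j2 i)) bb
      have h10 : (fun i => (fun i => 2 * (cc j1 i + cc j2 i)) i - bb i) = cc j1 := by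
        funext i; simp only [hbb_def]; ring
      have h11 : suppN n (fun i => 2 * (cc j1 i + cc j2 i)) ⊆
          suppN n (fun i => cc j1 i + cc j2 i) := by
        intro i hi
        rw [mem_suppN] at hi
        rw [mem_suppN]
        exact fun h => hi (Dvd.dvd.mul_left h 2)
      rw [h10] at h9
      refine h9.trans (Finset.union_subset h11 ?_)
      rw [hW]
    refine ⟨hmema, Finset.Subset.antisymm (suppN_add _ _) (Finset.union_subset hc1W hc2W),
      htracea⟩
  -- each Ij is nonempty
  have hIjne : ∀ j, j ∉ It → (suppN n (cc j) ∩ It).Nonempty := by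
    intro j hj
    by_contra hne2
    rw [Finset.not_nonempty_iff_eq_empty] at hne2
    have hsupp_eq : suppN n (cc j) = {j} := by
      apply Finset.Subset.antisymm
      · intro i hi
        rcases Finset.mem_insert.mp ((hcc j hj).2.1 hi) with h | h
        · exact Finset.mem_singleton.mpr h
        · exfalso
          have h9 : i ∈ suppN n (cc j) ∩ It := Finset.mem_inter.mpr ⟨hi, h⟩
          rw [hne2] at h9
          exact Finset.notMem_empty i h9
      · intro i hi
        rw [Finset.mem_singleton] at hi
        exact hi ▸ (hcc j hj).2.2
    have hsum := memK_sum_supp hsm (hcc j hj).1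
    rw [hsupp_eq, Finset.sum_singleton] at hsum
    exact hsingle j (cc j j) (mem_suppN.mp ((hcc j hj).2.2)) hsum
  -- disjointness
  have hdisj : ∀ j1, j1 ∉ It → ∀ j2, j2 ∉ It → j1 ≠ j2 →
      Disjoint (suppN n (cc j1) ∩ It) (suppN n (cc j2) ∩ It) := by
    intro j1 hj1 j2 hj2 hne
    rw [Finset.disjoint_left]
    intro i0 hi01 hi02
    obtain ⟨hi0s1, hi0It⟩ := Finset.mem_inter.mp hi01
    obtain ⟨hi0s2, -⟩ := Finset.mem_inter.mp hi02
    have hj1i0 : j1 ≠ i0 := fun h => hj1 (h ▸ hi0It)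
    have hj2i0 : j2 ≠ i0 := fun h => hj2 (h ▸ hi0It)
    set It' : Finset (Fin m) := insert j1 (insert j2 (It.erase i0)) with hIt'_def
    have hj2nmem : j2 ∉ It.erase i0 := fun h => hj2 (Finset.mem_of_mem_erase h)
    have hj1nmem : j1 ∉ insert j2 (It.erase i0) := by
      rw [Finset.mem_insert]
      rintro (h | h)
      · exact hne h
      · exact hj1 (Finset.mem_of_mem_erase h)
    have hr1 : 1 ≤ r := by
      have h9 := Finset.card_pos.mpr ⟨i0, hi0It⟩
      omega
    have hcardIt' : It'.card = r + 1 := by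
      rw [hIt'_def, Finset.card_insert_of_notMem hj1nmem,
        Finset.card_insert_of_notMem hj2nmem, Finset.card_erase_of_mem hi0It, htr]
      omega
    obtain ⟨cD, hcD, hcDsub, hcDne⟩ := davenport hn hedvd hexpH g hsm It' hcardIt'
    have hi0notIt' : i0 ∉ It' := by
      intro hmem
      rw [hIt'_def] at hmem
      rcases Finset.mem_insert.mp hmem with h | hmem2
      · exact hj1i0 h.symm
      rcases Finset.mem_insert.mp hmem2 with h | hmem3
      · exact hj2i0 h.symm
      · exact (Finset.mem_erase.mp hmem3).1 rfl
    have hUsub : suppN n cD ∩ Itᶜ ⊆ {j1, j2} := by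
      intro x hx
      obtain ⟨hx1, hx2⟩ := Finset.mem_inter.mp hx
      have hx3 := hcDsub hx1
      rw [hIt'_def] at hx3
      rcases Finset.mem_insert.mp hx3 with h | h3
      · exact Finset.mem_insert.mpr (Or.inl h)
      rcases Finset.mem_insert.mp h3 with h | h4
      · exact Finset.mem_insert.mpr (Or.inr (Finset.mem_singleton.mpr h))
      · exact absurd (Finset.mem_of_mem_erase h4) (Finset.mem_compl.mp hx2)
    have hi0cD : i0 ∉ suppN n cD := fun h => hi0notIt' (hcDsub h)
    by_cases hj1U : j1 ∈ suppN n cD ∩ Itᶜ <;> by_cases hj2U : j2 ∈ suppN n cD ∩ Itᶜ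
    · -- both
      have htr_eq : suppN n cD ∩ Itᶜ = {j1, j2} := by
        apply Finset.Subset.antisymm hUsub
        intro x hx
        rcases Finset.mem_insert.mp hx with h | hx2
        · rw [h]; exact hj1U
        · rw [Finset.mem_singleton] at hx2; rw [hx2]; exact hj2U
      obtain ⟨hma, huneq, htra⟩ := hpair j1 j2 hj1 hj2 hne
      have h10 := hstar cD _ hcD hma (by rw [htr_eq, htra])
      apply hi0cD
      rw [h10, huneq]
      exact Finset.mem_union_left _ hi0s1
    · -- j1 only
      have htr_eq : suppN n cD ∩ Itᶜ = {j1} := by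
        apply Finset.Subset.antisymm
        · intro x hx
          rcases Finset.mem_insert.mp (hUsub hx) with h | h
          · exact Finset.mem_singleton.mpr h
          · rw [Finset.mem_singleton] at h; exact absurd (h ▸ hx) hj2U
        · intro x hx; rw [Finset.mem_singleton] at hx; rw [hx]; exact hj1U
      have h10 := hstar cD (cc j1) hcD (hcc j1 hj1).1 (by rw [htr_eq, htrace1 j1 hj1])
      apply hi0cD
      rw [h10]
      exact hi0s1
    · -- j2 only
      have htr_eq : suppN n cD ∩ Itᶜ = {j2} := by
        apply Finset.Subset.antisymm
        · intro x hx
          rcases Finset.mem_insert.mp (hUsub hx) with h | h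
          · exact absurd (h ▸ hx) hj1U
          · exact h
        · intro x hx; rw [Finset.mem_singleton] at hx; rw [hx]; exact hj2U
      have h10 := hstar cD (cc j2) hcD (hcc j2 hj2).1 (by rw [htr_eq, htrace1 j2 hj2])
      apply hi0cD
      rw [h10]
      exact hi0s2
    · -- neither
      have hsubIt : suppN n cD ⊆ It := by
        intro x hx
        by_contra hxIt
        have hxU : x ∈ suppN n cD ∩ Itᶜ :=
          Finset.mem_inter.mpr ⟨hx, Finset.mem_compl.mpr hxIt⟩
        rcases Finset.mem_insert.mp (hUsub hxU) with h | h
        · exact hj1U (h ▸ hxU)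
        · rw [Finset.mem_singleton] at h; exact hj2U (h ▸ hxU)
      have h10 := hKfreeIt cD hcD hsubIt
      rw [h10] at hcDne
      exact Finset.not_nonempty_empty hcDne
  -- m ≤ 2r
  have hm2r : m ≤ 2 * r := by
    have hdisj' : ∀ x ∈ Itᶜ, ∀ y ∈ Itᶜ, x ≠ y →
        Disjoint (suppN n (cc x) ∩ It) (suppN n (cc y) ∩ It) := by
      intro x hx y hy hxy
      exact hdisj x (Finset.mem_compl.mp hx) y (Finset.mem_compl.mp hy) hxy
    have h1 : Itᶜ.card ≤ (Itᶜ.biUnion (fun j => suppN n (cc j) ∩ It)).card := by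
      rw [Finset.card_biUnion hdisj']
      calc Itᶜ.card = ∑ _j ∈ Itᶜ, 1 := by rw [Finset.sum_const, smul_eq_mul, mul_one]
      _ ≤ ∑ j ∈ Itᶜ, (suppN n (cc j) ∩ It).card := by
          apply Finset.sum_le_sum
          intro j hj
          exact Finset.card_pos.mpr (hIjne j (Finset.mem_compl.mp hj))
    have h2 : (Itᶜ.biUnion (fun j => suppN n (cc j) ∩ It)).card ≤ It.card := by
      apply Finset.card_le_card
      intro x hx
      obtain ⟨j, hj, hxj⟩ := Finset.mem_biUnion.mp hx
      exact (Finset.mem_inter.mp hxj).2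
    rw [Finset.card_compl, Fintype.card_fin, htr] at h1
    have h3 := le_trans h1 h2
    rw [htr] at h3
    omega
  -- final assembly
  refine ⟨hrm, hm2r, It, htr, hItfree, hItmax,
    fun j => suppN n (cc j) ∩ It, ?_, fun j1 hj1 j2 hj2 hne => hdisj j1 hj1 j2 hj2 hne⟩
  intro j hj
  refine ⟨Finset.inter_subset_right, ?_⟩
  have hc := hcc j hj
  have hsupp_eq : suppN n (cc j) = insert j (suppN n (cc j) ∩ It) := by
    ext i
    simp only [Finset.mem_insert, Finset.mem_inter]
    constructor
    · intro hi
      rcases Finset.mem_insert.mp (hc.2.1 hi) with h | h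
      · exact Or.inl h
      · exact Or.inr ⟨hi, h⟩
    · rintro (rfl | ⟨hi, -⟩)
      · exact hc.2.2
      · exact hi
  have hjnot : j ∉ suppN n (cc j) ∩ It := fun h => hj (Finset.mem_inter.mp h).2
  have hsum := memK_sum_supp hsm hc.1
  rw [hsupp_eq, Finset.sum_insert hjnot] at hsum
  have hndj : ¬ (n:ℤ) ∣ cc j j := mem_suppN.mp hc.2.2
  refine ⟨(- cc j j) % n, mod_memA hn (fun h => hndj (dvd_neg.mp h)),
    fun i => cc j i % n, ?_, ?_⟩
  · intro i hi
    exact mod_memA hn (mem_suppN.mp (Finset.mem_inter.mp hi).1)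
  · rw [smul_mod (hsm j), neg_smul,
      show (∑ i ∈ suppN n (cc j) ∩ It, (cc j i % (n:ℤ)) • g i)
        = ∑ i ∈ suppN n (cc j) ∩ It, cc j i • g i from
        Finset.sum_congr rfl (fun i _ => smul_mod (hsm i) (cc j i))]
    exact neg_eq_of_add_eq_zero_right hsum
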